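/- Let γ > 0 and t₀* > 0 be real numbers, let g : [0, t₀*] → ℝ be continuous with |g(s)| ≤ |g(0)| for all s ∈ [0, t₀*], and let ρ : [0, t₀*] → ℝ be continuous with ρ(t) > 0 for all t and ρ(t₀*) ≥ ρ(s)·e^(γ(t₀*−s)) for all s ∈ [0, t₀*]. Define θ'(t₀*) := −(1/ρ(t₀*)²)·∫₀^{t₀*} g(s)·ρ(s)² ds. Then |θ'(t₀*)| ≤ (|g(0)|/(2γ))·(1 − e^(−2γ·t₀*)). -/

import Mathlib

lemma aux_exp_int (γ t₀ : ℝ) (hγ : 0 < γ) :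
    ∫ s in (0:ℝ)..t₀, Real.exp (-2*γ*(t₀-s)) = (1 - Real.exp (-2*γ*t₀)) / (2*γ) := by
  have h : ∀ s ∈ Set.uIcc (0:ℝ) t₀,
      HasDerivAt (fun s => Real.exp (-2*γ*(t₀-s)) / (2*γ)) (Real.exp (-2*γ*(t₀-s))) s := by
    intro s _
    have h1 : HasDerivAt (fun s : ℝ => -2*γ*(t₀-s)) (2*γ) s := by
      have := ((hasDerivAt_id s).const_sub t₀).const_mul (-2*γ)
      simpa using this.congr_deriv (by ring)
    have h2 := (h1.exp).div_const (2*γ)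
    simpa [mul_div_assoc, mul_div_cancel_right₀ _ (by positivity : (2*γ) ≠ 0)] using h2
  have hint : IntervalIntegrable (fun s => Real.exp (-2*γ*(t₀-s))) MeasureTheory.volume 0 t₀ :=
    (Continuous.intervalIntegrable (by continuity) 0 t₀)
  rw [intervalIntegral.integral_eq_sub_of_hasDerivAt h hint]
  simp
  ring

/-- The angular derivative bound from the proof of Theorem 2.6 (gtransition): if
`|g(s)| ≤ |g(0)|` on `[0, t₀*]`, `ρ > 0` is continuous and satisfies the growth estimate
`ρ(t₀*) ≥ ρ(s)e^{γ(t₀*−s)}`, then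
`|θ'(t₀*)| = |−(1/ρ(t₀*)²)∫₀^{t₀*} gρ²| ≤ (|g(0)|/(2γ))(1 − e^{−2γt₀*})`. -/
theorem stmt_15 (γ t₀ : ℝ) (hγ : 0 < γ) (ht₀ : 0 < t₀)
    (g ρ : ℝ → ℝ)
    (hg : ContinuousOn g (Set.Icc 0 t₀))
    (hgb : ∀ s ∈ Set.Icc (0 : ℝ) t₀, |g s| ≤ |g 0|)
    (hρ : ContinuousOn ρ (Set.Icc 0 t₀))
    (hρpos : ∀ s ∈ Set.Icc (0 : ℝ) t₀, 0 < ρ s)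
    (hgrow : ∀ s ∈ Set.Icc (0 : ℝ) t₀, ρ s * Real.exp (γ * (t₀ - s)) ≤ ρ t₀) :
    |-(1 / (ρ t₀) ^ 2) * ∫ s in (0 : ℝ)..t₀, g s * (ρ s) ^ 2| ≤
      |g 0| / (2 * γ) * (1 - Real.exp (-2 * γ * t₀)) := by
  have ht₀mem : t₀ ∈ Set.Icc (0:ℝ) t₀ := ⟨le_of_lt ht₀, le_refl _⟩
  have hρt₀ : 0 < ρ t₀ := hρpos t₀ ht₀mem
  set B : ℝ → ℝ := fun s => |g 0| * (ρ t₀)^2 * Real.exp (-2*γ*(t₀-s)) with hB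
  have hbound : ∀ s ∈ Set.Icc (0:ℝ) t₀, |g s * (ρ s)^2| ≤ B s := by
    intro s hs
    have hρs := hρpos s hs
    have h1 : ρ s ≤ ρ t₀ * Real.exp (-(γ*(t₀-s))) := by
      have := mul_le_mul_of_nonneg_right (hgrow s hs) (Real.exp_pos (-(γ*(t₀-s)))).le
      simpa [mul_assoc, ← Real.exp_add] using this
    have h2 : (ρ s)^2 ≤ (ρ t₀)^2 * Real.exp (-2*γ*(t₀-s)) := by
      have hsq := mul_le_mul h1 h1 (le_of_lt hρs) (by positivity)
      calc (ρ s)^2 = ρ s * ρ s := sq ..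
        _ ≤ (ρ t₀ * Real.exp (-(γ*(t₀-s)))) * (ρ t₀ * Real.exp (-(γ*(t₀-s)))) := hsq
        _ = (ρ t₀)^2 * Real.exp (-2*γ*(t₀-s)) := by
            rw [show (-2*γ*(t₀-s)) = (-(γ*(t₀-s))) + (-(γ*(t₀-s))) by ring, Real.exp_add]
            ring
    calc |g s * (ρ s)^2| = |g s| * (ρ s)^2 := by rw [abs_mul, abs_of_nonneg (sq_nonneg (ρ s))]
      _ ≤ |g 0| * ((ρ t₀)^2 * Real.exp (-2*γ*(t₀-s))) :=
          mul_le_mul (hgb s hs) h2 (by positivity) (abs_nonneg _)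
      _ = B s := by rw [hB]; ring
  have hBint : IntervalIntegrable B MeasureTheory.volume 0 t₀ :=
    (Continuous.intervalIntegrable (by continuity) 0 t₀)
  have hmain : |∫ s in (0:ℝ)..t₀, g s * (ρ s)^2| ≤ |∫ s in (0:ℝ)..t₀, B s| := by
    have := intervalIntegral.norm_integral_le_abs_of_norm_le (μ := MeasureTheory.volume)
      (f := fun s => g s * (ρ s)^2) (g := B) (a := 0) (b := t₀) ?_ hBint
    · simpa using this
    · rw [MeasureTheory.ae_restrict_iff' measurableSet_uIoc]
      refine Filter.Eventually.of_forall (fun s hs => ?_)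
      have : s ∈ Set.Icc (0:ℝ) t₀ := by
        rw [Set.uIoc_of_le (le_of_lt ht₀)] at hs
        exact ⟨le_of_lt hs.1, hs.2⟩
      simpa [abs_mul, abs_of_nonneg (sq_nonneg (ρ s))] using hbound s this
  have hBval : ∫ s in (0:ℝ)..t₀, B s
      = |g 0| * (ρ t₀)^2 * ((1 - Real.exp (-2*γ*t₀)) / (2*γ)) := by
    rw [hB]
    rw [intervalIntegral.integral_const_mul, aux_exp_int γ t₀ hγ]
  rw [abs_mul, abs_neg, abs_of_nonneg (by positivity : (0:ℝ) ≤ 1/(ρ t₀)^2)]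
  have hBnonneg : 0 ≤ ∫ s in (0:ℝ)..t₀, B s := by
    rw [hBval]
    have he : Real.exp (-2*γ*t₀) ≤ 1 := by
      rw [Real.exp_le_one_iff]; nlinarith
    exact mul_nonneg (mul_nonneg (abs_nonneg _) (sq_nonneg _))
      (div_nonneg (by linarith) (by positivity))
  rw [abs_of_nonneg hBnonneg, hBval] at hmain
  calc 1/(ρ t₀)^2 * |∫ s in (0:ℝ)..t₀, g s * (ρ s)^2|
      ≤ 1/(ρ t₀)^2 * (|g 0| * (ρ t₀)^2 * ((1 - Real.exp (-2*γ*t₀)) / (2*γ))) :=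
        mul_le_mul_of_nonneg_left hmain (by positivity)
    _ = |g 0| / (2*γ) * (1 - Real.exp (-2*γ*t₀)) := by
        field_simp
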